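/- Let (X, U) be a uniform space and let C(U) := ⋂_{V ∈ U} C⟨{V}⟩ be the intersection over all uniform entourages V of the coarse structures generated by V. If C(U) is compatible with U (i.e., there exists an entourage that is both in C(U) and in U), then every uniformly excisive decomposition (A, B) of X (with A ∪ B = X) is coarsely excisive for the coarse structure C(U): for every W ∈ C(U) there exists W' ∈ C(U) such that W[A] ∩ W[B] ⊆ W'[A ∩ B]. -/

import Mathlib

/-- `W[S] = {x | ∃ s ∈ S, (x,s) ∈ W}`. -/
def relImage {α : Type*} (W : Set (α × α)) (S : Set α) : Set α := {x | ∃ s ∈ S, (x, s) ∈ W}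

/-- Symmetrization of an entourage together with the diagonal. -/
def symmClose {α : Type*} (V : Set (α × α)) : Set (α × α) :=
  V ∪ (Prod.swap '' V) ∪ Set.diagonal α

/-- Finite compositions of an entourage. -/
def relPow {α : Type*} (V : Set (α × α)) : ℕ → Set (α × α)
  | 0 => Set.diagonal α
  | n + 1 => SetRel.comp (relPow V n) V

/-- `W` belongs to the coarse structure `C⟨{V}⟩` generated by the single entourage `V`:
it is contained in some finite composition of `V ∪ V⁻¹ ∪ diag`. -/
def inCoarseGen {α : Type*} (V W : Set (α × α)) : Prop := ∃ n, W ⊆ relPow (symmClose V) n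

/-- Membership in `C(𝒰) = ⋂_{V ∈ 𝒰} C⟨{V}⟩`, the intersection over all uniform entourages
`V` of the coarse structures generated by `V`. -/
def memCU (X : Type*) [UniformSpace X] (W : Set (X × X)) : Prop :=
  ∀ V ∈ uniformity X, inCoarseGen V W

section helpers

variable {α : Type*}

lemma diag_subset_symmClose (V : Set (α × α)) : Set.diagonal α ⊆ symmClose V :=
  fun p hp => Or.inr hp

lemma relPow_mono {S T : Set (α × α)} (h : S ⊆ T) : ∀ n, relPow S n ⊆ relPow T n
  | 0 => subset_rfl
  | n + 1 => SetRel.comp_subset_comp (relPow_mono h n) h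

lemma diag_subset_relPow {S : Set (α × α)} (h : Set.diagonal α ⊆ S) :
    ∀ n, Set.diagonal α ⊆ relPow S n
  | 0 => subset_rfl
  | n + 1 => fun p hp => by
      rcases p with ⟨a, b⟩
      have hab : a = b := hp
      subst hab
      exact ⟨a, diag_subset_relPow h n hp, h hp⟩

lemma relPow_succ_superset {S : Set (α × α)} (h : Set.diagonal α ⊆ S) (n : ℕ) :
    relPow S n ⊆ relPow S (n + 1) := fun p hp => by
  rcases p with ⟨a, b⟩
  exact ⟨b, hp, h rfl⟩

lemma compRel_relPow {S : Set (α × α)} : ∀ (a b : ℕ),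
    SetRel.comp (relPow S a) (relPow S b) ⊆ relPow S (a + b)
  | a, 0 => fun p hp => by
      rcases p with ⟨x, y⟩
      rcases hp with ⟨c, hc, hcy⟩
      have : c = y := hcy
      subst this
      exact hc
  | a, b + 1 => fun p hp => by
      rcases p with ⟨x, y⟩
      rcases hp with ⟨c, hc, hcy⟩
      rcases hcy with ⟨d, hd, hdy⟩
      exact ⟨d, compRel_relPow a b ⟨c, hc, hd⟩, hdy⟩

lemma relPow_one (S : Set (α × α)) : relPow S 1 = S := by
  ext ⟨x, y⟩
  constructor
  · rintro ⟨c, hc, hcy⟩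
    have : x = c := hc
    subst this
    exact hcy
  · intro h
    exact ⟨x, rfl, h⟩

lemma symmClose_symm {V : Set (α × α)} {a b : α} (h : (a, b) ∈ symmClose V) :
    (b, a) ∈ symmClose V := by
  rcases h with (h | h) | h
  · exact Or.inl (Or.inr ⟨(a, b), h, rfl⟩)
  · rcases h with ⟨⟨u, v⟩, huv, heq⟩
    cases heq
    exact Or.inl (Or.inl huv)
  · exact Or.inr (show b = a from h.symm)

lemma relPow_symm {S : Set (α × α)} (hs : ∀ a b : α, (a, b) ∈ S → (b, a) ∈ S) :
    ∀ n, ∀ a b : α, (a, b) ∈ relPow S n → (b, a) ∈ relPow S n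
  | 0, a, b, h => (show a = b from h).symm
  | n + 1, a, b, h => by
      rcases h with ⟨c, hc, hcb⟩
      have h1 : (b, c) ∈ S := hs _ _ hcb
      have h2 : (c, a) ∈ relPow S n := relPow_symm hs n a c hc
      have : (b, a) ∈ SetRel.comp (relPow S 1) (relPow S n) := by
        rw [relPow_one]; exact ⟨c, h1, h2⟩
      have := compRel_relPow 1 n this
      simpa [Nat.add_comm] using this

end helpers

section memCUlemmas

variable {X : Type*} [UniformSpace X]

lemma memCU_mono {W W' : Set (X × X)} (h : W ⊆ W') (hW' : memCU X W') : memCU X W := by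
  intro V hV
  rcases hW' V hV with ⟨n, hn⟩
  exact ⟨n, h.trans hn⟩

lemma memCU_diag : memCU X (Set.diagonal X) := fun V _ => ⟨0, subset_rfl⟩

lemma memCU_compRel {P Q : Set (X × X)} (hP : memCU X P) (hQ : memCU X Q) :
    memCU X (SetRel.comp P Q) := by
  intro V hV
  rcases hP V hV with ⟨n, hn⟩
  rcases hQ V hV with ⟨m, hm⟩
  exact ⟨n + m, (SetRel.comp_subset_comp hn hm).trans (compRel_relPow n m)⟩

lemma memCU_symmClose {P : Set (X × X)} (hP : memCU X P) : memCU X (symmClose P) := by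
  intro V hV
  rcases hP V hV with ⟨n, hn⟩
  refine ⟨n, ?_⟩
  rintro ⟨a, b⟩ hab
  rcases hab with (h | h) | h
  · exact hn h
  · rcases h with ⟨⟨u, v⟩, huv, heq⟩
    cases heq
    exact relPow_symm (fun a b h => symmClose_symm h) n u v (hn huv)
  · exact diag_subset_relPow (diag_subset_symmClose V) n h

lemma memCU_relPow {P : Set (X × X)} (hP : memCU X P) : ∀ m, memCU X (relPow P m)
  | 0 => memCU_diag
  | m + 1 => memCU_compRel (memCU_relPow hP m) hP

end memCUlemmas

/-- Crossing lemma: along a chain from a point of `A` to a point of `B`, there is a point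
which is `S`-close to both `A` and `B`. -/
lemma crossing {α : Type*} {A B : Set α} (hAB : A ∪ B = Set.univ)
    {S : Set (α × α)} (hd : Set.diagonal α ⊆ S) {x : α} (hx : x ∈ A) :
    ∀ {m : ℕ} {b : α}, b ∈ B → (x, b) ∈ relPow S m →
      ∃ y, (x, y) ∈ relPow S m ∧ y ∈ relImage S A ∧ y ∈ relImage S B := by
  intro m
  induction m with
  | zero =>
      intro b hb hxb
      have : x = b := hxb
      subst this
      exact ⟨x, rfl, ⟨x, hx, hd rfl⟩, ⟨x, hb, hd rfl⟩⟩
  | succ n ih =>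
      intro b hb hxb
      rcases hxb with ⟨c, hc, hcb⟩
      have hcAB : c ∈ A ∪ B := hAB ▸ Set.mem_univ c
      rcases hcAB with hcA | hcB
      · exact ⟨c, relPow_succ_superset hd n hc, ⟨c, hcA, hd rfl⟩, ⟨b, hb, hcb⟩⟩
      · rcases ih hcB hc with ⟨y, hy, hyA, hyB⟩
        exact ⟨y, relPow_succ_superset hd n hy, hyA, hyB⟩

/-- If `C(𝒰)` is compatible with the uniform structure, then every uniformly excisive
decomposition `(A,B)` of `X` is coarsely excisive for the coarse structure `C(𝒰)`. -/
theorem stmt0 {X : Type*} [UniformSpace X] (A B : Set X) (hAB : A ∪ B = Set.univ)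
    (hcompat : ∃ U : Set (X × X), memCU X U ∧ U ∈ uniformity X)
    (hexc : ∃ U₀ ∈ uniformity X, ∃ κ : Set (X × X) → Set (X × X),
      (∀ W W' : Set (X × X), W ⊆ W' → W' ⊆ U₀ → κ W ⊆ κ W') ∧
      (∀ V ∈ uniformity X, ∃ W ∈ uniformity X, W ⊆ U₀ ∧ κ W ⊆ V) ∧
      (∀ W : Set (X × X), W ⊆ U₀ →
        relImage W A ∩ relImage W B ⊆ relImage (κ W) (A ∩ B))) :
    ∀ W : Set (X × X), memCU X W →
      ∃ W' : Set (X × X), memCU X W' ∧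
        relImage W A ∩ relImage W B ⊆ relImage W' (A ∩ B) := by
  obtain ⟨Uc, hUcCU, hUcU⟩ := hcompat
  obtain ⟨U₀, hU₀, κ, hκmono, hκadm, hκexc⟩ := hexc
  intro W hW
  -- choose a uniform W₁ ⊆ U₀ with κ(W₁) ⊆ Uc
  obtain ⟨W₁, hW₁U, hW₁U₀, hκW₁⟩ := hκadm Uc hUcU
  -- symmetric uniform entourage inside W₁ ∩ Uc
  set V₁ : Set (X × X) := SetRel.symmetrize (W₁ ∩ Uc) with hV₁def
  have hV₁U : V₁ ∈ uniformity X := symmetrize_mem_uniformity (Filter.inter_mem hW₁U hUcU)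
  have hV₁symm : Prod.swap ⁻¹' V₁ = V₁ := by
    ext ⟨a, b⟩; exact ⟨fun h => ⟨h.2, h.1⟩, fun h => ⟨h.2, h.1⟩⟩
  have hV₁W₁ : V₁ ⊆ W₁ := (SetRel.symmetrize_subset_self (R := W₁ ∩ Uc)).trans Set.inter_subset_left
  have hV₁Uc : V₁ ⊆ Uc := (SetRel.symmetrize_subset_self (R := W₁ ∩ Uc)).trans Set.inter_subset_right
  set S : Set (X × X) := symmClose V₁ with hSdef
  have hdiagS : Set.diagonal X ⊆ S := diag_subset_symmClose V₁
  have hswapV₁ : Prod.swap '' V₁ = V₁ := by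
    rw [Set.image_swap_eq_preimage_swap]; exact hV₁symm
  have hSW₁ : S ⊆ W₁ := by
    rintro p hp
    rcases hp with (h | h) | h
    · exact hV₁W₁ h
    · rw [hswapV₁] at h; exact hV₁W₁ h
    · rcases p with ⟨a, b⟩
      have : a = b := h
      subst this
      exact refl_mem_uniformity hW₁U
  have hSUc : S ⊆ symmClose Uc := by
    rintro p hp
    rcases hp with (h | h) | h
    · exact Or.inl (Or.inl (hV₁Uc h))
    · rw [hswapV₁] at h; exact Or.inl (Or.inl (hV₁Uc h))
    · exact Or.inr h
  -- W is contained in some power of S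
  obtain ⟨n, hWn⟩ := hW V₁ hV₁U
  -- the answer
  refine ⟨SetRel.comp (relPow (symmClose Uc) n) Uc, ?_, ?_⟩
  · exact memCU_compRel (memCU_relPow (memCU_symmClose hUcCU) n) hUcCU
  · rintro x ⟨⟨a, haA, hxa⟩, ⟨b, hbB, hxb⟩⟩
    have hxa' : (x, a) ∈ relPow S n := hWn hxa
    have hxb' : (x, b) ∈ relPow S n := hWn hxb
    have hxAB : x ∈ A ∪ B := hAB ▸ Set.mem_univ x
    have key : ∃ y, (x, y) ∈ relPow S n ∧ y ∈ relImage S A ∧ y ∈ relImage S B := by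
      rcases hxAB with hxA | hxB
      · exact crossing hAB hdiagS hxA hbB hxb'
      · have hBA : B ∪ A = Set.univ := by rw [Set.union_comm]; exact hAB
        rcases crossing hBA hdiagS hxB haA hxa' with ⟨y, hy, hyB, hyA⟩
        exact ⟨y, hy, hyA, hyB⟩
    obtain ⟨y, hxy, hyA, hyB⟩ := key
    have hSU₀ : S ⊆ U₀ := hSW₁.trans hW₁U₀
    have hyκ : y ∈ relImage (κ S) (A ∩ B) := hκexc S hSU₀ ⟨hyA, hyB⟩
    obtain ⟨z, hzAB, hyz⟩ := hyκ
    have hyzUc : (y, z) ∈ Uc := hκW₁ (hκmono S W₁ hSW₁ hW₁U₀ hyz)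
    exact ⟨z, hzAB, ⟨y, relPow_mono hSUc n hxy, hyzUc⟩⟩
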